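/- The cut norm of the step kernel of a matrix is attained on grid rectangles: for any A ∈ ℝ^{m×n} with associated step kernel W_A on [0,1]² (constant A_{ij} on the (i,j)-th grid rectangle of the m×n partition), mn·‖W_A‖_□ = max over x ∈ {0,1}^m, y ∈ {0,1}^n of |xᵀ A y|, where ‖W‖_□ = sup over measurable S,T ⊆ [0,1] of |∫_{S×T} W dx dy|. -/

import Mathlib

open MeasureTheory Real Set

lemma lin_le {k : ℕ} (c s : Fin k → ℝ) (hs : ∀ i, 0 ≤ s i ∧ s i ≤ 1) :
    ∑ i, c i * s i ≤ ∑ i, c i * (if 0 ≤ c i then (1:ℝ) else 0) := by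
  apply Finset.sum_le_sum
  intro i _
  by_cases h : 0 ≤ c i
  · simp only [h, if_true]
    nlinarith [(hs i).1, (hs i).2]
  · simp only [h, if_false]
    push_neg at h
    nlinarith [(hs i).1]

lemma bilin_le {m n : ℕ} (A : Matrix (Fin m) (Fin n) ℝ) (s : Fin m → ℝ) (t : Fin n → ℝ)
    (hs : ∀ i, 0 ≤ s i ∧ s i ≤ 1) (ht : ∀ j, 0 ≤ t j ∧ t j ≤ 1) :
    ∑ i, ∑ j, s i * A i j * t j ≤
      ⨆ p : (Fin m → Bool) × (Fin n → Bool),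
        |∑ i, ∑ j, (if p.1 i then (1 : ℝ) else 0) * A i j * (if p.2 j then (1 : ℝ) else 0)| := by
  have e1 : ∀ u : Fin n → ℝ, ∑ i, ∑ j, s i * A i j * u j = ∑ j, (∑ i, s i * A i j) * u j := by
    intro u
    rw [Finset.sum_comm]
    exact Finset.sum_congr rfl fun j _ => (Finset.sum_mul _ _ _).symm
  have ht'01 : ∀ j, 0 ≤ (fun j => if 0 ≤ ∑ i, s i * A i j then (1:ℝ) else 0) j ∧
      (fun j => if 0 ≤ ∑ i, s i * A i j then (1:ℝ) else 0) j ≤ 1 := by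
    intro j; dsimp only; split_ifs <;> norm_num
  have step1 : ∑ i, ∑ j, s i * A i j * t j ≤
      ∑ i, ∑ j, s i * A i j * (if 0 ≤ ∑ i, s i * A i j then (1:ℝ) else 0) := by
    rw [e1, e1]
    exact lin_le _ _ ht
  have e2 : ∀ u v : Fin m → ℝ,
      (∑ i, ∑ j, u i * A i j * (if 0 ≤ ∑ i, s i * A i j then (1:ℝ) else 0))
      = ∑ i, (∑ j, A i j * (if 0 ≤ ∑ i, s i * A i j then (1:ℝ) else 0)) * u i := by
    intro u v
    apply Finset.sum_congr rfl; intro i _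
    rw [Finset.sum_mul]
    apply Finset.sum_congr rfl; intro j _; ring
  have step2 : (∑ i, ∑ j, s i * A i j * (if 0 ≤ ∑ i, s i * A i j then (1:ℝ) else 0)) ≤
      ∑ i, ∑ j, (if 0 ≤ ∑ j, A i j * (if 0 ≤ ∑ i, s i * A i j then (1:ℝ) else 0) then (1:ℝ) else 0)
        * A i j * (if 0 ≤ ∑ i, s i * A i j then (1:ℝ) else 0) := by
    rw [e2 s s, e2 (fun i => if 0 ≤ ∑ j, A i j * (if 0 ≤ ∑ i, s i * A i j then (1:ℝ) else 0) then (1:ℝ) else 0) s]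
    exact lin_le _ _ hs
  set p : (Fin m → Bool) × (Fin n → Bool) :=
    (fun i => decide (0 ≤ ∑ j, A i j * (if 0 ≤ ∑ i, s i * A i j then (1:ℝ) else 0)),
     fun j => decide (0 ≤ ∑ i, s i * A i j)) with hp
  have hmatch : (∑ i, ∑ j, (if 0 ≤ ∑ j, A i j * (if 0 ≤ ∑ i, s i * A i j then (1:ℝ) else 0) then (1:ℝ) else 0)
        * A i j * (if 0 ≤ ∑ i, s i * A i j then (1:ℝ) else 0)) =
      ∑ i, ∑ j, (if p.1 i then (1 : ℝ) else 0) * A i j * (if p.2 j then (1 : ℝ) else 0) := by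
    apply Finset.sum_congr rfl; intro i _
    apply Finset.sum_congr rfl; intro j _
    rw [hp]
    simp [decide_eq_true_eq]
  have hbdd : BddAbove (Set.range fun p : (Fin m → Bool) × (Fin n → Bool) =>
      |∑ i, ∑ j, (if p.1 i then (1 : ℝ) else 0) * A i j * (if p.2 j then (1 : ℝ) else 0)|) :=
    Set.Finite.bddAbove (Set.finite_range _)
  calc ∑ i, ∑ j, s i * A i j * t j
      ≤ ∑ i, ∑ j, (if p.1 i then (1 : ℝ) else 0) * A i j * (if p.2 j then (1 : ℝ) else 0) := by
        rw [← hmatch]; exact le_trans step1 step2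
    _ ≤ |∑ i, ∑ j, (if p.1 i then (1 : ℝ) else 0) * A i j * (if p.2 j then (1 : ℝ) else 0)| :=
        le_abs_self _
    _ ≤ _ := le_ciSup hbdd p

lemma bilin_abs_le {m n : ℕ} (A : Matrix (Fin m) (Fin n) ℝ) (s : Fin m → ℝ) (t : Fin n → ℝ)
    (hs : ∀ i, 0 ≤ s i ∧ s i ≤ 1) (ht : ∀ j, 0 ≤ t j ∧ t j ≤ 1) :
    |∑ i, ∑ j, s i * A i j * t j| ≤
      ⨆ p : (Fin m → Bool) × (Fin n → Bool),
        |∑ i, ∑ j, (if p.1 i then (1 : ℝ) else 0) * A i j * (if p.2 j then (1 : ℝ) else 0)| := by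
  rw [abs_le]
  refine ⟨?_, bilin_le A s t hs ht⟩
  have h := bilin_le (-A) s t hs ht
  have h2 : ∑ i, ∑ j, s i * (-A) i j * t j = -(∑ i, ∑ j, s i * A i j * t j) := by
    simp only [Matrix.neg_apply, mul_neg, neg_mul, Finset.sum_neg_distrib]
  have h3 : (⨆ p : (Fin m → Bool) × (Fin n → Bool),
        |∑ i, ∑ j, (if p.1 i then (1 : ℝ) else 0) * (-A) i j * (if p.2 j then (1 : ℝ) else 0)|)
      = ⨆ p : (Fin m → Bool) × (Fin n → Bool),
        |∑ i, ∑ j, (if p.1 i then (1 : ℝ) else 0) * A i j * (if p.2 j then (1 : ℝ) else 0)| := by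
    apply iSup_congr
    intro p
    rw [show ∑ i, ∑ j, (if p.1 i then (1 : ℝ) else 0) * (-A) i j * (if p.2 j then (1 : ℝ) else 0)
        = -(∑ i, ∑ j, (if p.1 i then (1 : ℝ) else 0) * A i j * (if p.2 j then (1 : ℝ) else 0)) by
      simp only [Matrix.neg_apply, mul_neg, neg_mul, Finset.sum_neg_distrib], abs_neg]
  rw [h2, h3] at h
  linarith

lemma step_integral {m n : ℕ} (A : Matrix (Fin m) (Fin n) ℝ) (W : ℝ → ℝ → ℝ)
    (hW : ∀ x y : ℝ, W x y = ∑ i : Fin m, ∑ j : Fin n,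
      if ((i : ℝ) / m < x ∧ x ≤ ((i : ℝ) + 1) / m ∧
          (j : ℝ) / n < y ∧ y ≤ ((j : ℝ) + 1) / n) then A i j else 0)
    (S T : Set ℝ) (hSm : MeasurableSet S) (hTm : MeasurableSet T)
    (hS : S ⊆ Set.Icc 0 1) (hT : T ⊆ Set.Icc 0 1) :
    ∫ x in S, ∫ y in T, W x y =
      ∑ i : Fin m, ∑ j : Fin n, A i j * (volume (S ∩ Set.Ioc ((i:ℝ)/m) (((i:ℝ)+1)/m))).toReal
        * (volume (T ∩ Set.Ioc ((j:ℝ)/n) (((j:ℝ)+1)/n))).toReal := by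
  have hTfin : volume T < ⊤ := by
    refine lt_of_le_of_lt (measure_mono hT) ?_
    rw [Real.volume_Icc]; exact ENNReal.ofReal_lt_top
  have hSfin : volume S < ⊤ := by
    refine lt_of_le_of_lt (measure_mono hS) ?_
    rw [Real.volume_Icc]; exact ENNReal.ofReal_lt_top
  have key : ∀ (i : Fin m) (j : Fin n) (x : ℝ),
      (fun y => if ((i : ℝ) / m < x ∧ x ≤ ((i : ℝ) + 1) / m ∧
          (j : ℝ) / n < y ∧ y ≤ ((j : ℝ) + 1) / n) then A i j else 0) =
      (Set.Ioc ((j:ℝ)/n) (((j:ℝ)+1)/n)).indicator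
        (fun _ => if x ∈ Set.Ioc ((i:ℝ)/m) (((i:ℝ)+1)/m) then A i j else 0) := by
    intro i j x; funext y
    simp only [Set.indicator, Set.mem_Ioc]
    split_ifs <;> tauto
  have inner : ∀ x : ℝ, ∫ y in T, W x y =
      ∑ i : Fin m, ∑ j : Fin n, (if x ∈ Set.Ioc ((i:ℝ)/m) (((i:ℝ)+1)/m) then A i j else 0)
        * (volume (T ∩ Set.Ioc ((j:ℝ)/n) (((j:ℝ)+1)/n))).toReal := by
    intro x
    have : (fun y => W x y) = fun y => ∑ i : Fin m, ∑ j : Fin n,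
        (Set.Ioc ((j:ℝ)/n) (((j:ℝ)+1)/n)).indicator
          (fun _ => if x ∈ Set.Ioc ((i:ℝ)/m) (((i:ℝ)+1)/m) then A i j else 0) y := by
      funext y
      rw [hW]
      apply Finset.sum_congr rfl; intro i _
      apply Finset.sum_congr rfl; intro j _
      rw [← key i j x]
    rw [show ∫ y in T, W x y = ∫ y in T, (fun y => W x y) y from rfl, this]
    rw [integral_finset_sum]
    · apply Finset.sum_congr rfl; intro i _
      rw [integral_finset_sum]
      · apply Finset.sum_congr rfl; intro j _
        rw [setIntegral_indicator measurableSet_Ioc, setIntegral_const, smul_eq_mul, mul_comm]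
        rfl
      · intro j _
        exact (integrableOn_const hTfin.ne).indicator measurableSet_Ioc
    · intro i _
      apply integrable_finset_sum
      intro j _
      exact (integrableOn_const hTfin.ne).indicator measurableSet_Ioc
  calc ∫ x in S, ∫ y in T, W x y
      = ∫ x in S, ∑ i : Fin m, ∑ j : Fin n, (Set.Ioc ((i:ℝ)/m) (((i:ℝ)+1)/m)).indicator
          (fun _ => A i j * (volume (T ∩ Set.Ioc ((j:ℝ)/n) (((j:ℝ)+1)/n))).toReal) x := by
        apply setIntegral_congr_fun hSm
        intro x _
        simp only []
        rw [inner x]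
        apply Finset.sum_congr rfl; intro i _
        apply Finset.sum_congr rfl; intro j _
        simp only [Set.indicator]
        split_ifs <;> simp
    _ = ∑ i : Fin m, ∑ j : Fin n, A i j * (volume (S ∩ Set.Ioc ((i:ℝ)/m) (((i:ℝ)+1)/m))).toReal
        * (volume (T ∩ Set.Ioc ((j:ℝ)/n) (((j:ℝ)+1)/n))).toReal := by
        rw [integral_finset_sum]
        · apply Finset.sum_congr rfl; intro i _
          rw [integral_finset_sum]
          · apply Finset.sum_congr rfl; intro j _
            rw [setIntegral_indicator measurableSet_Ioc, setIntegral_const, smul_eq_mul]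
            unfold Measure.real
            ring
          · intro j _
            exact (integrableOn_const hSfin.ne).indicator measurableSet_Ioc
        · intro i _
          apply integrable_finset_sum
          intro j _
          exact (integrableOn_const hSfin.ne).indicator measurableSet_Ioc

lemma same_cell {m : ℕ} (hm : 0 < m) (i i' : Fin m) (x : ℝ)
    (h1 : x ∈ Set.Ioc ((i:ℝ)/m) (((i:ℝ)+1)/m))
    (h2 : x ∈ Set.Ioc ((i':ℝ)/m) (((i':ℝ)+1)/m)) : i = i' := by
  have hm' : (0:ℝ) < m := by exact_mod_cast hm
  simp only [Set.mem_Ioc] at h1 h2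
  have h4 : (i':ℝ)/m < ((i:ℝ)+1)/m := lt_of_lt_of_le h2.1 h1.2
  have h5 : (i:ℝ)/m < ((i':ℝ)+1)/m := lt_of_lt_of_le h1.1 h2.2
  rw [div_lt_div_iff_of_pos_right hm'] at h4 h5
  have : (i:ℕ) = (i':ℕ) := by
    have b1 : (i':ℕ) < (i:ℕ) + 1 := by exact_mod_cast show ((i':ℕ):ℝ) < (i:ℕ) + 1 by linarith
    have b2 : (i:ℕ) < (i':ℕ) + 1 := by exact_mod_cast show ((i:ℕ):ℝ) < (i':ℕ) + 1 by linarith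
    omega
  exact Fin.ext this

lemma grid_subset {m : ℕ} (hm : 0 < m) (i : Fin m) :
    Set.Ioc ((i:ℝ)/m) (((i:ℝ)+1)/m) ⊆ Set.Icc (0:ℝ) 1 := by
  have hm' : (0:ℝ) < m := by exact_mod_cast hm
  intro x hx
  simp only [Set.mem_Ioc] at hx
  constructor
  · have : (0:ℝ) ≤ (i:ℝ)/m := by positivity
    linarith [hx.1]
  · refine le_trans hx.2 ?_
    rw [div_le_one hm']
    have : (i:ℕ) + 1 ≤ m := i.isLt
    exact_mod_cast this

lemma grid_vol {m : ℕ} (hm : 0 < m) (i : Fin m) :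
    (volume (Set.Ioc ((i:ℝ)/m) (((i:ℝ)+1)/m))).toReal = 1/m := by
  have hm' : (0:ℝ) < m := by exact_mod_cast hm
  rw [Real.volume_Ioc, ENNReal.toReal_ofReal (by rw [sub_nonneg]; gcongr; linarith)]
  field_simp
  ring

/-- The cut norm of the step kernel of a matrix is attained on grid rectangles:
mn·‖W_A‖_□ equals the maximum of |xᵀAy| over 0/1-vectors x ∈ {0,1}^m, y ∈ {0,1}^n. -/
theorem cut_norm_step_kernel (m n : ℕ) (hm : 0 < m) (hn : 0 < n)
    (A : Matrix (Fin m) (Fin n) ℝ)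
    (W : ℝ → ℝ → ℝ)
    (hW : ∀ x y : ℝ, W x y = ∑ i : Fin m, ∑ j : Fin n,
      if ((i : ℝ) / m < x ∧ x ≤ ((i : ℝ) + 1) / m ∧
          (j : ℝ) / n < y ∧ y ≤ ((j : ℝ) + 1) / n) then A i j else 0) :
    (m * n : ℝ) *
      sSup {v : ℝ | ∃ S T : Set ℝ, MeasurableSet S ∧ MeasurableSet T ∧
        S ⊆ Set.Icc (0 : ℝ) 1 ∧ T ⊆ Set.Icc (0 : ℝ) 1 ∧
        v = |∫ x in S, ∫ y in T, W x y|}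
    = ⨆ p : (Fin m → Bool) × (Fin n → Bool),
        |∑ i, ∑ j, (if p.1 i then (1 : ℝ) else 0) * A i j *
          (if p.2 j then (1 : ℝ) else 0)| := by
  have hm' : (0:ℝ) < m := by exact_mod_cast hm
  have hn' : (0:ℝ) < n := by exact_mod_cast hn
  have hmn : (0:ℝ) < (m:ℝ) * n := by positivity
  set M : ℝ := ⨆ p : (Fin m → Bool) × (Fin n → Bool),
      |∑ i, ∑ j, (if p.1 i then (1 : ℝ) else 0) * A i j * (if p.2 j then (1 : ℝ) else 0)| with hM
  set SS : Set ℝ := {v : ℝ | ∃ S T : Set ℝ, MeasurableSet S ∧ MeasurableSet T ∧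
      S ⊆ Set.Icc (0 : ℝ) 1 ∧ T ⊆ Set.Icc (0 : ℝ) 1 ∧
      v = |∫ x in S, ∫ y in T, W x y|} with hSS
  have hbdd : BddAbove (Set.range fun p : (Fin m → Bool) × (Fin n → Bool) =>
      |∑ i, ∑ j, (if p.1 i then (1 : ℝ) else 0) * A i j * (if p.2 j then (1 : ℝ) else 0)|) :=
    Set.Finite.bddAbove (Set.finite_range _)
  -- upper bound
  have upper : ∀ v ∈ SS, v ≤ M / ((m:ℝ) * n) := by
    rintro v ⟨S, T, hSm, hTm, hS1, hT1, rfl⟩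
    rw [step_integral A W hW S T hSm hTm hS1 hT1]
    set a : Fin m → ℝ := fun i => (volume (S ∩ Set.Ioc ((i:ℝ)/m) (((i:ℝ)+1)/m))).toReal with ha
    set b : Fin n → ℝ := fun j => (volume (T ∩ Set.Ioc ((j:ℝ)/n) (((j:ℝ)+1)/n))).toReal with hb
    have ha01 : ∀ i, 0 ≤ (m:ℝ) * a i ∧ (m:ℝ) * a i ≤ 1 := by
      intro i
      have h0 : 0 ≤ a i := ENNReal.toReal_nonneg
      have h1 : a i ≤ 1/m := by
        rw [ha]
        calc (volume (S ∩ Set.Ioc ((i:ℝ)/m) (((i:ℝ)+1)/m))).toReal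
            ≤ (volume (Set.Ioc ((i:ℝ)/m) (((i:ℝ)+1)/m))).toReal := by
              apply ENNReal.toReal_mono _ (measure_mono Set.inter_subset_right)
              rw [Real.volume_Ioc]; exact ENNReal.ofReal_ne_top
          _ = 1/m := grid_vol hm i
      constructor
      · positivity
      · calc (m:ℝ) * a i ≤ (m:ℝ) * (1/m) := by nlinarith
          _ = 1 := by field_simp
    have hb01 : ∀ j, 0 ≤ (n:ℝ) * b j ∧ (n:ℝ) * b j ≤ 1 := by
      intro j
      have h0 : 0 ≤ b j := ENNReal.toReal_nonneg
      have h1 : b j ≤ 1/n := by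
        rw [hb]
        calc (volume (T ∩ Set.Ioc ((j:ℝ)/n) (((j:ℝ)+1)/n))).toReal
            ≤ (volume (Set.Ioc ((j:ℝ)/n) (((j:ℝ)+1)/n))).toReal := by
              apply ENNReal.toReal_mono _ (measure_mono Set.inter_subset_right)
              rw [Real.volume_Ioc]; exact ENNReal.ofReal_ne_top
          _ = 1/n := grid_vol hn j
      constructor
      · positivity
      · calc (n:ℝ) * b j ≤ (n:ℝ) * (1/n) := by nlinarith
          _ = 1 := by field_simp
    have hre : ∑ i : Fin m, ∑ j : Fin n, A i j * a i * b j
        = (∑ i : Fin m, ∑ j : Fin n, ((m:ℝ) * a i) * A i j * ((n:ℝ) * b j)) / ((m:ℝ) * n) := by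
      rw [eq_div_iff (ne_of_gt hmn)]
      rw [Finset.sum_mul]
      apply Finset.sum_congr rfl; intro i _
      rw [Finset.sum_mul]
      apply Finset.sum_congr rfl; intro j _
      ring
    rw [hre, abs_div, abs_of_pos hmn]
    gcongr
    exact bilin_abs_le A (fun i => (m:ℝ) * a i) (fun j => (n:ℝ) * b j) ha01 hb01
  -- attained
  have mem : M / ((m:ℝ) * n) ∈ SS := by
    obtain ⟨p, hp⟩ := Finite.exists_max (fun p : (Fin m → Bool) × (Fin n → Bool) =>
      |∑ i, ∑ j, (if p.1 i then (1 : ℝ) else 0) * A i j * (if p.2 j then (1 : ℝ) else 0)|)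
    have hMp : M = |∑ i, ∑ j, (if p.1 i then (1 : ℝ) else 0) * A i j
        * (if p.2 j then (1 : ℝ) else 0)| :=
      le_antisymm (ciSup_le hp) (le_ciSup hbdd p)
    set S : Set ℝ := ⋃ i : {i : Fin m // p.1 i = true}, Set.Ioc (((i:Fin m):ℝ)/m) ((((i:Fin m):ℝ)+1)/m) with hSdef
    set T : Set ℝ := ⋃ j : {j : Fin n // p.2 j = true}, Set.Ioc (((j:Fin n):ℝ)/n) ((((j:Fin n):ℝ)+1)/n) with hTdef
    have hSm : MeasurableSet S := MeasurableSet.iUnion fun _ => measurableSet_Ioc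
    have hTm : MeasurableSet T := MeasurableSet.iUnion fun _ => measurableSet_Ioc
    have hS1 : S ⊆ Set.Icc (0:ℝ) 1 := Set.iUnion_subset fun i => grid_subset hm _
    have hT1 : T ⊆ Set.Icc (0:ℝ) 1 := Set.iUnion_subset fun j => grid_subset hn _
    refine ⟨S, T, hSm, hTm, hS1, hT1, ?_⟩
    rw [step_integral A W hW S T hSm hTm hS1 hT1]
    have hSI : ∀ i0 : Fin m, (volume (S ∩ Set.Ioc ((i0:ℝ)/m) (((i0:ℝ)+1)/m))).toReal
        = (if p.1 i0 then (1:ℝ) else 0) / m := by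
      intro i0
      by_cases hp1 : p.1 i0 = true
      · have : S ∩ Set.Ioc ((i0:ℝ)/m) (((i0:ℝ)+1)/m) = Set.Ioc ((i0:ℝ)/m) (((i0:ℝ)+1)/m) := by
          apply Set.inter_eq_self_of_subset_right
          exact Set.subset_iUnion_of_subset ⟨i0, hp1⟩ subset_rfl
        rw [this, grid_vol hm i0, hp1]
        norm_num
      · have : S ∩ Set.Ioc ((i0:ℝ)/m) (((i0:ℝ)+1)/m) = ∅ := by
          ext x
          simp only [Set.mem_inter_iff, Set.mem_empty_iff_false, iff_false, not_and, hSdef,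
            Set.mem_iUnion]
          rintro ⟨⟨i, hi⟩, hx⟩ hx0
          exact hp1 (same_cell hm i i0 x hx hx0 ▸ hi)
        rw [this]
        simp [hp1]
    have hTJ : ∀ j0 : Fin n, (volume (T ∩ Set.Ioc ((j0:ℝ)/n) (((j0:ℝ)+1)/n))).toReal
        = (if p.2 j0 then (1:ℝ) else 0) / n := by
      intro j0
      by_cases hp2 : p.2 j0 = true
      · have : T ∩ Set.Ioc ((j0:ℝ)/n) (((j0:ℝ)+1)/n) = Set.Ioc ((j0:ℝ)/n) (((j0:ℝ)+1)/n) := by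
          apply Set.inter_eq_self_of_subset_right
          exact Set.subset_iUnion_of_subset ⟨j0, hp2⟩ subset_rfl
        rw [this, grid_vol hn j0, hp2]
        norm_num
      · have : T ∩ Set.Ioc ((j0:ℝ)/n) (((j0:ℝ)+1)/n) = ∅ := by
          ext y
          simp only [Set.mem_inter_iff, Set.mem_empty_iff_false, iff_false, not_and, hTdef,
            Set.mem_iUnion]
          rintro ⟨⟨j, hj⟩, hy⟩ hy0
          exact hp2 (same_cell hn j j0 y hy hy0 ▸ hj)
        rw [this]
        simp [hp2]
    have hfin : ∑ i : Fin m, ∑ j : Fin n,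
        A i j * (volume (S ∩ Set.Ioc ((i:ℝ)/m) (((i:ℝ)+1)/m))).toReal
          * (volume (T ∩ Set.Ioc ((j:ℝ)/n) (((j:ℝ)+1)/n))).toReal
        = (∑ i, ∑ j, (if p.1 i then (1 : ℝ) else 0) * A i j
            * (if p.2 j then (1 : ℝ) else 0)) / ((m:ℝ) * n) := by
      rw [eq_div_iff (ne_of_gt hmn), Finset.sum_mul]
      apply Finset.sum_congr rfl; intro i _
      rw [Finset.sum_mul]
      apply Finset.sum_congr rfl; intro j _
      rw [hSI i, hTJ j]
      field_simp
    rw [hfin, abs_div, abs_of_pos hmn, hMp]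
  have hBdd : BddAbove SS := ⟨M / ((m:ℝ) * n), upper⟩
  have hsup : sSup SS = M / ((m:ℝ) * n) :=
    le_antisymm (csSup_le ⟨_, mem⟩ upper) (le_csSup hBdd mem)
  rw [hsup]
  field_simp
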